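/- arXiv:2604.10032 — 2 statements merged into one kernel-verified Lean document; each statement's English description precedes it below -/
import Mathlib

section
/- Let W0 ∈ ℝ^{p×n}, let c ∈ ℝ^n be a target concept vector, v* ∈ ℝ^p a desired target output, and C_pres ∈ ℝ^{n×m} a matrix of preserved concept embeddings. Set N = c cᵀ + C_pres C_presᵀ and assume N is positive definite (hence invertible). Define the UCE update ΔW = (v* − W0 c) cᵀ N^{-1} ∈ ℝ^{p×n}. Suppose p ∈ ℝ^n is a preserved vector and λ > 0 is such that cᵀ N^{-1} p ≥ λ · (cᵀ N^{-1} c). Then ‖ΔW p‖₂ ≥ λ · ‖ΔW c‖₂, i.e., the perturbation on the preserved vector p is at least λ times the perturbation on the target vector c. -/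
open Matrix

/-- Euclidean (ℓ²) norm of a real vector. -/
noncomputable def euclidNorm {n : ℕ} (v : Fin n → ℝ) : ℝ :=
  ‖(WithLp.equiv 2 (Fin n → ℝ)).symm v‖

lemma euclidNorm_smul {n : ℕ} (r : ℝ) (v : Fin n → ℝ) :
    euclidNorm (r • v) = |r| * euclidNorm v := by
  unfold euclidNorm
  rw [show (WithLp.equiv 2 (Fin n → ℝ)).symm (r • v)
      = r • (WithLp.equiv 2 (Fin n → ℝ)).symm v from rfl, norm_smul]
  simp [Real.norm_eq_abs]

lemma vecMulVec_mulVec' {p n : ℕ} (a : Fin p → ℝ) (b : Fin n → ℝ) (x : Fin n → ℝ) :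
    (Matrix.vecMulVec a b).mulVec x = (b ⬝ᵥ x) • a := by
  funext i
  simp only [Matrix.mulVec, Matrix.vecMulVec, dotProduct, Matrix.of_apply,
    Pi.smul_apply, smul_eq_mul, Finset.sum_mul]
  exact Finset.sum_congr rfl fun j _ => by ring

/-- **Perturbation of Preserved Concepts (UCE).**
Let `N = c cᵀ + C_pres C_presᵀ` be positive definite and
`ΔW = (v* − W0 c) cᵀ N⁻¹` the UCE update.  If a preserved vector `p`
satisfies `cᵀ N⁻¹ p ≥ λ (cᵀ N⁻¹ c)` for some `λ > 0`, then
`‖ΔW p‖₂ ≥ λ ‖ΔW c‖₂`. -/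
theorem uce_perturbation_of_preserved
    {p n m : ℕ}
    (W0 : Matrix (Fin p) (Fin n) ℝ)
    (c : Fin n → ℝ) (vstar : Fin p → ℝ)
    (Cpres : Matrix (Fin n) (Fin m) ℝ)
    (N : Matrix (Fin n) (Fin n) ℝ)
    (hN : N = Matrix.vecMulVec c c + Cpres * Cpresᵀ)
    (hNpd : N.PosDef)
    (ΔW : Matrix (Fin p) (Fin n) ℝ)
    (hΔW : ΔW = Matrix.vecMulVec (vstar - W0.mulVec c) (Matrix.vecMul c N⁻¹))
    (pvec : Fin n → ℝ) (lam : ℝ) (hlam : 0 < lam)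
    (halign : Matrix.vecMul c N⁻¹ ⬝ᵥ pvec ≥ lam * (Matrix.vecMul c N⁻¹ ⬝ᵥ c)) :
    euclidNorm (ΔW.mulVec pvec) ≥ lam * euclidNorm (ΔW.mulVec c) := by
  set u := vstar - W0.mulVec c with hu
  set w := Matrix.vecMul c N⁻¹ with hw
  have h1 : ΔW.mulVec pvec = (w ⬝ᵥ pvec) • u := by rw [hΔW, vecMulVec_mulVec']
  have h2 : ΔW.mulVec c = (w ⬝ᵥ c) • u := by rw [hΔW, vecMulVec_mulVec']
  rw [h1, h2, euclidNorm_smul, euclidNorm_smul]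
  -- key: w ⬝ᵥ c ≥ 0
  have hinv : (N⁻¹).PosDef := hNpd.inv
  have hherm : (N⁻¹).IsHermitian := hinv.isHermitian
  have hsym : N⁻¹ᵀ = N⁻¹ := by
    have := hherm.eq
    rwa [Matrix.conjTranspose_eq_transpose_of_trivial] at this
  have hc : w ⬝ᵥ c = c ⬝ᵥ (N⁻¹).mulVec c := by
    rw [hw, dotProduct_comm, ← Matrix.mulVec_transpose, hsym]
  have hcnn : 0 ≤ w ⬝ᵥ c := by
    rw [hc]
    exact hinv.posSemidef.dotProduct_mulVec_nonneg c
  have habs_c : |w ⬝ᵥ c| = w ⬝ᵥ c := abs_of_nonneg hcnn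
  have hpnn : 0 ≤ w ⬝ᵥ pvec :=
    le_trans (mul_nonneg hlam.le hcnn) halign
  have habs_p : |w ⬝ᵥ pvec| = w ⬝ᵥ pvec := abs_of_nonneg hpnn
  rw [habs_c, habs_p]
  have henorm : 0 ≤ euclidNorm u := norm_nonneg _
  calc lam * (w ⬝ᵥ c * euclidNorm u) = (lam * (w ⬝ᵥ c)) * euclidNorm u := by ring
    _ ≤ (w ⬝ᵥ pvec) * euclidNorm u := mul_le_mul_of_nonneg_right halign henorm
end

section
/- Let target concept vectors c_1, …, c_T ∈ ℝ^n with desired outputs v_1, …, v_T ∈ ℝ^p, preserved concept vectors d_1, …, d_m ∈ ℝ^n, and a pretrained map W0 ∈ ℝ^{p×n} be given. Assume the Gram matrix G = Σ_{i=1}^T c_i c_iᵀ + Σ_{j=1}^m d_j d_jᵀ is invertible, and define W* = (Σ_{i=1}^T v_i c_iᵀ + Σ_{j=1}^m W0 d_j d_jᵀ) G^{-1}. Then W* minimizes the UCE objective: for every W ∈ ℝ^{p×n}, Σ_{i=1}^T ‖W* c_i − v_i‖₂² + Σ_{j=1}^m ‖W* d_j − W0 d_j‖₂² ≤ Σ_{i=1}^T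 ‖W c_i − v_i‖₂² + Σ_{j=1}^m ‖W d_j − W0 d_j‖₂². -/
open Matrix

lemma enorm_sq {n : ℕ} (u : Fin n → ℝ) : euclidNorm u ^ 2 = ∑ k, u k ^ 2 := by
  rw [euclidNorm, EuclideanSpace.norm_eq, Real.sq_sqrt (by positivity)]
  simp [sq_abs]

lemma vmv_sub {p n : ℕ} (a b : Fin p → ℝ) (x : Fin n → ℝ) :
    vecMulVec (a - b) x = vecMulVec a x - vecMulVec b x := by
  ext k l; simp [vecMulVec_apply, sub_mul]

lemma vmv_mulVec {p n : ℕ} (M : Matrix (Fin p) (Fin n) ℝ) (x y : Fin n → ℝ) :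
    vecMulVec (M.mulVec x) y = M * vecMulVec x y := by
  ext k l
  simp [vecMulVec_apply, Matrix.mul_apply, Matrix.mulVec, dotProduct,
    Finset.sum_mul, mul_assoc]

lemma cross_eq {p n : ℕ} {ι : Type*} [Fintype ι] (E : Matrix (Fin p) (Fin n) ℝ)
    (x : ι → Fin n → ℝ) (s : ι → Fin p → ℝ) :
    ∑ i, ∑ k, s i k * E.mulVec (x i) k
      = ∑ k, ∑ l, (∑ i, vecMulVec (s i) (x i)) k l * E k l := by
  simp only [Matrix.mulVec, dotProduct, Finset.sum_apply, Matrix.sum_apply,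
    vecMulVec_apply, Finset.mul_sum, Finset.sum_mul]
  rw [Finset.sum_comm]
  refine Finset.sum_congr rfl fun k _ => ?_
  rw [Finset.sum_comm]
  exact Finset.sum_congr rfl fun l _ => Finset.sum_congr rfl fun i _ => by ring

/-- **The UCE closed-form solution minimizes the UCE objective.**
With Gram matrix `G = Σᵢ cᵢ cᵢᵀ + Σⱼ dⱼ dⱼᵀ` invertible, the matrix
`W* = (Σᵢ vᵢ cᵢᵀ + Σⱼ (W0 dⱼ) dⱼᵀ) G⁻¹` satisfies, for every `W`,
`Σᵢ ‖W* cᵢ − vᵢ‖² + Σⱼ ‖W* dⱼ − W0 dⱼ‖² ≤ Σᵢ ‖W cᵢ − vᵢ‖² + Σⱼ ‖W dⱼ − W0 dⱼ‖²`. -/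
theorem uce_closed_form_minimizes_objective
    {p n T m : ℕ}
    (W0 : Matrix (Fin p) (Fin n) ℝ)
    (c : Fin T → Fin n → ℝ) (v : Fin T → Fin p → ℝ)
    (d : Fin m → Fin n → ℝ)
    (G : Matrix (Fin n) (Fin n) ℝ)
    (hG : G = ∑ i, Matrix.vecMulVec (c i) (c i) + ∑ j, Matrix.vecMulVec (d j) (d j))
    (hGinv : IsUnit G.det)
    (Wstar : Matrix (Fin p) (Fin n) ℝ)
    (hWstar : Wstar =
      (∑ i, Matrix.vecMulVec (v i) (c i)
        + ∑ j, Matrix.vecMulVec (W0.mulVec (d j)) (d j)) * G⁻¹) :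
    ∀ W : Matrix (Fin p) (Fin n) ℝ,
      (∑ i, euclidNorm (Wstar.mulVec (c i) - v i) ^ 2)
        + ∑ j, euclidNorm (Wstar.mulVec (d j) - W0.mulVec (d j)) ^ 2
      ≤ (∑ i, euclidNorm (W.mulVec (c i) - v i) ^ 2)
        + ∑ j, euclidNorm (W.mulVec (d j) - W0.mulVec (d j)) ^ 2 := by
  intro W
  set E : Matrix (Fin p) (Fin n) ℝ := W - Wstar with hE
  -- residual matrix is zero
  have hWG : Wstar * G = ∑ i, Matrix.vecMulVec (v i) (c i)
      + ∑ j, Matrix.vecMulVec (W0.mulVec (d j)) (d j) := by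
    rw [hWstar, Matrix.mul_assoc, Matrix.nonsing_inv_mul G hGinv, Matrix.mul_one]
  have hR : (∑ i, vecMulVec (Wstar.mulVec (c i) - v i) (c i))
      + ∑ j, vecMulVec (Wstar.mulVec (d j) - W0.mulVec (d j)) (d j) = 0 := by
    have h2 := hWG
    rw [hG] at h2
    simp only [vmv_sub, vmv_mulVec, Finset.sum_sub_distrib, ← Matrix.mul_sum] at h2 ⊢
    rw [Matrix.mul_add] at h2
    rw [sub_add_sub_comm, h2, sub_self]
  -- total cross term vanishes
  have hcross : (∑ i, ∑ k, (Wstar.mulVec (c i) - v i) k * E.mulVec (c i) k)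
      + ∑ j, ∑ k, (Wstar.mulVec (d j) - W0.mulVec (d j)) k * E.mulVec (d j) k = 0 := by
    rw [cross_eq E c (fun i => Wstar.mulVec (c i) - v i),
        cross_eq E d (fun j => Wstar.mulVec (d j) - W0.mulVec (d j)),
        ← Finset.sum_add_distrib]
    refine Finset.sum_eq_zero fun k _ => ?_
    rw [← Finset.sum_add_distrib]
    refine Finset.sum_eq_zero fun l _ => ?_
    have : ((∑ i, vecMulVec (Wstar.mulVec (c i) - v i) (c i))
        + ∑ j, vecMulVec (Wstar.mulVec (d j) - W0.mulVec (d j)) (d j)) k l = 0 := by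
      rw [hR]; rfl
    simp only [Matrix.add_apply] at this
    linear_combination E k l * this
  -- expansion of each squared norm
  have expand : ∀ (x : Fin n → ℝ) (y : Fin p → ℝ),
      euclidNorm (W.mulVec x - y) ^ 2
        = euclidNorm (Wstar.mulVec x - y) ^ 2
          + 2 * (∑ k, (Wstar.mulVec x - y) k * E.mulVec x k)
          + ∑ k, E.mulVec x k ^ 2 := by
    intro x y
    have h : W.mulVec x - y = (Wstar.mulVec x - y) + E.mulVec x := by
      rw [hE, Matrix.sub_mulVec]; abel
    rw [enorm_sq, enorm_sq, h, Finset.mul_sum, ← Finset.sum_add_distrib,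
      ← Finset.sum_add_distrib]
    exact Finset.sum_congr rfl fun k _ => by simp only [Pi.add_apply]; ring
  calc (∑ i, euclidNorm (Wstar.mulVec (c i) - v i) ^ 2)
        + ∑ j, euclidNorm (Wstar.mulVec (d j) - W0.mulVec (d j)) ^ 2
      ≤ ((∑ i, euclidNorm (Wstar.mulVec (c i) - v i) ^ 2)
          + ∑ j, euclidNorm (Wstar.mulVec (d j) - W0.mulVec (d j)) ^ 2)
        + 2 * ((∑ i, ∑ k, (Wstar.mulVec (c i) - v i) k * E.mulVec (c i) k)
            + ∑ j, ∑ k, (Wstar.mulVec (d j) - W0.mulVec (d j)) k * E.mulVec (d j) k)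
        + ((∑ i, ∑ k, E.mulVec (c i) k ^ 2) + ∑ j, ∑ k, E.mulVec (d j) k ^ 2) := by
        rw [hcross]
        have h1 : (0:ℝ) ≤ ∑ i, ∑ k, E.mulVec (c i) k ^ 2 := by positivity
        have h2 : (0:ℝ) ≤ ∑ j, ∑ k, E.mulVec (d j) k ^ 2 := by positivity
        linarith
    _ = (∑ i, euclidNorm (W.mulVec (c i) - v i) ^ 2)
        + ∑ j, euclidNorm (W.mulVec (d j) - W0.mulVec (d j)) ^ 2 := by
        simp only [expand, Finset.sum_add_distrib, ← Finset.mul_sum]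
        ring
end
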